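/- Let Δ_t : ℕ → ℝ, t = 1,…,T, be cost functions of the form Δ_t(x) = W·exp(−x·λ·δ) + α·f(t)·x with W ≥ 0, λ, δ, α > 0 and f strictly increasing positive. Fix x₁ ∈ {0,…,H} and define the greedy sequence by x*_1 = x₁ and x*_t = argmin over {0,…,x*_{t−1}} of Δ_t (taking the least minimizer). Then for every non-increasing sequence (y_t) with y_1 = x₁ and y_t ∈ {0,…,H}, we have ∑_{t=1}^{T} Δ_t(x*_t) ≤ ∑_{t=1}^{T} Δ_t(y_t). -/

import Mathlib

/-- Optimality of the greedy schedule among non-increasing schedules with the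
same initial helper count (Lemma 2 of the paper). -/
theorem stmt_3 (W lam δ α : ℝ) (hW : 0 ≤ W) (hlam : 0 < lam) (hδ : 0 < δ)
    (hα : 0 < α) (f : ℕ → ℝ) (hf : StrictMono f) (hfpos : ∀ t, 0 < f t)
    (Δ : ℕ → ℕ → ℝ)
    (hΔ : ∀ t x, Δ t x = W * Real.exp (-(x : ℝ) * lam * δ) + α * f t * x)
    (T H x₁ : ℕ) (hx₁ : x₁ ≤ H)
    (xs : ℕ → ℕ) (hxs1 : xs 1 = x₁)
    (hgreedy : ∀ t, 2 ≤ t → t ≤ T →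
      xs t ≤ xs (t - 1) ∧
      (∀ u ≤ xs (t - 1), Δ t (xs t) ≤ Δ t u) ∧
      (∀ u ≤ xs (t - 1), Δ t u ≤ Δ t (xs t) → xs t ≤ u))
    (y : ℕ → ℕ) (hy1 : y 1 = x₁)
    (hyH : ∀ t, 1 ≤ t → t ≤ T → y t ≤ H)
    (hymono : ∀ t, 2 ≤ t → t ≤ T → y t ≤ y (t - 1)) :
    ∑ t ∈ Finset.Icc 1 T, Δ t (xs t) ≤ ∑ t ∈ Finset.Icc 1 T, Δ t (y t) := by
  -- convexity step: if the step at x is nonnegative, so is the step at any z ≥ x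
  have hconv : ∀ t x z : ℕ, x ≤ z → Δ t x ≤ Δ t (x+1) → Δ t z ≤ Δ t (z+1) := by
    intro t x z hxz h
    simp only [hΔ] at h ⊢
    have hx1 : Real.exp (-((x:ℕ)+1 : ℝ) * lam * δ)
        = Real.exp (-(x:ℝ) * lam * δ) * Real.exp (-(lam * δ)) := by
      rw [← Real.exp_add]; ring_nf
    have hz1 : Real.exp (-((z:ℕ)+1 : ℝ) * lam * δ)
        = Real.exp (-(z:ℝ) * lam * δ) * Real.exp (-(lam * δ)) := by
      rw [← Real.exp_add]; ring_nf
    push_cast at h ⊢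
    rw [hx1] at h
    rw [hz1]
    have hE1 : Real.exp (-(lam * δ)) ≤ 1 := by
      rw [Real.exp_le_one_iff]
      nlinarith
    have hez : Real.exp (-(z:ℝ) * lam * δ) ≤ Real.exp (-(x:ℝ) * lam * δ) := by
      apply Real.exp_le_exp.2
      have hxz' : (x:ℝ) ≤ (z:ℝ) := Nat.cast_le.2 hxz
      nlinarith [mul_nonneg (mul_nonneg (sub_nonneg.2 hxz') hlam.le) hδ.le]
    have hezpos : 0 < Real.exp (-(z:ℝ) * lam * δ) := Real.exp_pos _
    nlinarith [mul_le_mul_of_nonneg_left hez (mul_nonneg hW (sub_nonneg.2 hE1))]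
  -- consequence: if step at x is nonnegative then Δ t is ≥ Δ t x on [x, ∞)
  have hmono_from : ∀ t x : ℕ, Δ t x ≤ Δ t (x+1) → ∀ u, x ≤ u → Δ t x ≤ Δ t u := by
    intro t x h u hu
    induction u, hu using Nat.le_induction with
    | base => exact le_rfl
    | succ m hm ih => exact le_trans ih (hconv t x m hm h)
  -- time shift: a comparison u < v that holds at time t holds at time t+1
  have hshift : ∀ t u v : ℕ, u < v → Δ t u ≤ Δ t v → Δ (t+1) u ≤ Δ (t+1) v := by
    intro t u v huv h
    simp only [hΔ] at h ⊢
    have hfv : f t < f (t+1) := hf (Nat.lt_succ_self t)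
    have huv' : (u:ℝ) < (v:ℝ) := Nat.cast_lt.2 huv
    nlinarith [mul_nonneg (mul_nonneg hα.le (sub_nonneg.2 hfv.le)) (sub_nonneg.2 huv'.le)]
  -- main invariant
  have main : ∀ t, 1 ≤ t → t ≤ T →
      (y t ≤ xs t ∨ ∀ u ≤ H, Δ t (xs t) ≤ Δ t u) := by
    intro t ht
    induction t, ht using Nat.le_induction with
    | base =>
      intro _
      left
      rw [hy1, hxs1]
    | succ n hn ih =>
      intro hnT
      obtain ⟨hle, hmin, -⟩ := hgreedy (n+1) (by omega) hnT
      rw [Nat.add_sub_cancel] at hle hmin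
      by_cases hcase : y (n+1) ≤ xs (n+1)
      · exact Or.inl hcase
      · right
        push_neg at hcase
        rcases ih (by omega) with hyx | hglob
        · -- y n ≤ xs n
          have hyy : y (n+1) ≤ y n := by
            have := hymono (n+1) (by omega) hnT
            simpa using this
          have h1 : xs (n+1) < xs n := lt_of_lt_of_le hcase (le_trans hyy hyx)
          have h2 : Δ (n+1) (xs (n+1)) ≤ Δ (n+1) (xs (n+1) + 1) := hmin _ h1
          intro u hu
          by_cases huc : u ≤ xs n
          · exact hmin u huc
          · exact hmono_from (n+1) (xs (n+1)) h2 u (by omega)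
        · intro u hu
          by_cases huc : u ≤ xs n
          · exact hmin u huc
          · have h3 : Δ (n+1) (xs n) ≤ Δ (n+1) u :=
              hshift n (xs n) u (by omega) (hglob u hu)
            exact le_trans (hmin (xs n) le_rfl) h3
  apply Finset.sum_le_sum
  intro t ht
  rw [Finset.mem_Icc] at ht
  obtain ⟨h1, h2⟩ := ht
  rcases main t h1 h2 with hyx | hglob
  · rcases eq_or_lt_of_le h1 with h | h
    · subst h
      rw [hxs1, hy1]
    · obtain ⟨hle, hmin, -⟩ := hgreedy t (by omega) h2
      exact hmin (y t) (le_trans hyx hle)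
  · exact hglob (y t) (hyH t h1 h2)
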